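/- Let H₀ be an n×n complex diagonal matrix with trace 0, let O(H₀) = {g H₀ g⁻¹ : g ∈ GL(n,ℂ)}, and let S(H₀) be the set of diagonal matrices belonging to O(H₀). For every ε > 0 there exists Γ_ε > 0 such that: for every x ∈ O(H₀) with ‖x − y‖ > ε for all y ∈ S(H₀), one has ‖diag(x)‖ < Γ_ε · ‖x − diag(x)‖, where diag(x) is the diagonal matrix with the same diagonal entries as x. (The orbit is not asymptotic to the Cartan subalgebra of diagonal matrices.) -/

import Mathlib

attribute [local instance] Matrix.frobeniusNormedAddCommGroup
attribute [local instance] Matrix.frobeniusNormedSpace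

/-- The adjoint orbit of the diagonal matrix `H₀ = diagonal d`. -/
def adjointOrbit (n : ℕ) (d : Fin n → ℂ) : Set (Matrix (Fin n) (Fin n) ℂ) :=
  {x | ∃ g : GL (Fin n) ℂ, x = (g : Matrix (Fin n) (Fin n) ℂ) * Matrix.diagonal d *
        ((g⁻¹ : GL (Fin n) ℂ) : Matrix (Fin n) (Fin n) ℂ)}

/-- The diagonal part of a square matrix. -/
def diagPart {n : ℕ} (x : Matrix (Fin n) (Fin n) ℂ) : Matrix (Fin n) (Fin n) ℂ :=
  Matrix.diagonal (fun i => x i i)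

namespace AwayFromSing

open Matrix Finset Filter Topology

noncomputable section

variable {n : ℕ}

/-- Every entry is dominated by the Frobenius norm. -/
lemma entry_le (A : Matrix (Fin n) (Fin n) ℂ) (i j : Fin n) : ‖A i j‖ ≤ ‖A‖ := by
  rw [Matrix.frobenius_norm_def]
  have h2 : ‖A i j‖ ^ (2:ℝ) ≤ ∑ i', ∑ j', ‖A i' j'‖ ^ (2:ℝ) := by
    calc ‖A i j‖ ^ (2:ℝ) ≤ ∑ j', ‖A i j'‖ ^ (2:ℝ) :=
          Finset.single_le_sum (fun k _ => Real.rpow_nonneg (norm_nonneg _) _) (mem_univ j)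
      _ ≤ ∑ i', ∑ j', ‖A i' j'‖ ^ (2:ℝ) :=
          Finset.single_le_sum
            (fun k _ => Finset.sum_nonneg fun l _ => Real.rpow_nonneg (norm_nonneg _) _)
            (mem_univ i)
  calc ‖A i j‖ = (‖A i j‖ ^ (2:ℝ)) ^ (1/2:ℝ) := by
        rw [← Real.rpow_mul (norm_nonneg _)]
        norm_num
    _ ≤ (∑ i', ∑ j', ‖A i' j'‖ ^ (2:ℝ)) ^ (1/2:ℝ) :=
        Real.rpow_le_rpow (Real.rpow_nonneg (norm_nonneg _) _) h2 (by norm_num)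

lemma continuous_entry (i j : Fin n) : Continuous fun x : Matrix (Fin n) (Fin n) ℂ => x i j := by
  have h : LipschitzWith 1 fun x : Matrix (Fin n) (Fin n) ℂ => x i j := by
    apply LipschitzWith.of_dist_le_mul
    intro x y
    rw [dist_eq_norm, dist_eq_norm, NNReal.coe_one, one_mul]
    calc ‖x i j - y i j‖ = ‖(x - y) i j‖ := by rw [Matrix.sub_apply]
      _ ≤ ‖x - y‖ := entry_le _ i j
  exact h.continuous

lemma continuous_det_shift (t : ℂ) :
    Continuous fun x : Matrix (Fin n) (Fin n) ℂ => (t • (1 : Matrix (Fin n) (Fin n) ℂ) - x).det := by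
  simp only [Matrix.det_apply]
  apply continuous_finset_sum
  intro σ _
  apply Continuous.const_smul
  apply continuous_finset_prod
  intro i _
  have h1 : (fun x : Matrix (Fin n) (Fin n) ℂ => (t • (1 : Matrix (Fin n) (Fin n) ℂ) - x) (σ i) i)
      = fun x => (t • (1 : Matrix (Fin n) (Fin n) ℂ)) (σ i) i - x (σ i) i := by
    funext x; rw [Matrix.sub_apply]
  rw [h1]
  exact continuous_const.sub (continuous_entry (σ i) i)

lemma norm_diagonal_le (v : Fin n → ℂ) (M : ℝ) (hM : 0 ≤ M) (h : ∀ i, ‖v i‖ ≤ M) :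
    ‖Matrix.diagonal v‖ ≤ Real.sqrt n * M := by
  rw [Matrix.frobenius_norm_diagonal, PiLp.norm_eq_of_L2]
  calc Real.sqrt (∑ i, ‖((WithLp.equiv 2 _).symm v) i‖ ^ 2)
      ≤ Real.sqrt (∑ _i : Fin n, M ^ 2) := by
        apply Real.sqrt_le_sqrt
        apply Finset.sum_le_sum
        intro i _
        show ‖v i‖ ^ 2 ≤ M ^ 2
        exact pow_le_pow_left₀ (norm_nonneg _) (h i) 2
    _ = Real.sqrt n * M := by
        rw [Finset.sum_const, Finset.card_univ, Fintype.card_fin, nsmul_eq_mul,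
          Real.sqrt_mul (by positivity), Real.sqrt_sq hM]

lemma smul_one_sub_diag (t : ℂ) (v : Fin n → ℂ) :
    t • (1 : Matrix (Fin n) (Fin n) ℂ) - Matrix.diagonal v
      = Matrix.diagonal (fun j => t - v j) := by
  ext i j
  by_cases h : i = j
  · subst h; simp [Matrix.one_apply_eq]
  · simp [Matrix.one_apply_ne h, Matrix.diagonal_apply_ne _ h]

lemma orbit_det (d : Fin n → ℂ) {x : Matrix (Fin n) (Fin n) ℂ} (hx : x ∈ adjointOrbit n d)
    (t : ℂ) : (t • (1 : Matrix (Fin n) (Fin n) ℂ) - x).det = ∏ j, (t - d j) := by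
  obtain ⟨g, rfl⟩ := hx
  have h1 : t • (1 : Matrix (Fin n) (Fin n) ℂ) -
      (g : Matrix (Fin n) (Fin n) ℂ) * Matrix.diagonal d *
        ((g⁻¹ : GL (Fin n) ℂ) : Matrix (Fin n) (Fin n) ℂ)
      = (g : Matrix (Fin n) (Fin n) ℂ) * (t • (1 : Matrix (Fin n) (Fin n) ℂ) - Matrix.diagonal d) *
        ((g⁻¹ : GL (Fin n) ℂ) : Matrix (Fin n) (Fin n) ℂ) := by
    rw [mul_sub, sub_mul]
    congr 1
    rw [Matrix.mul_smul, Matrix.mul_one, Matrix.smul_mul]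
    congr 1
    exact (Units.mul_inv g).symm
  rw [h1, Matrix.det_mul, Matrix.det_mul, mul_comm, ← mul_assoc, ← Matrix.det_mul,
    Units.inv_mul g, Matrix.det_one, one_mul, smul_one_sub_diag, Matrix.det_diagonal]

lemma det_bound (y : Matrix (Fin n) (Fin n) ℂ) (i₀ : Fin n) (h0 : y i₀ i₀ = 0)
    (Q b : ℝ) (hb : 0 ≤ b) (hbQ : b ≤ Q)
    (hd : ∀ l, ‖y l l‖ ≤ Q) (ho : ∀ l j, l ≠ j → ‖y l j‖ ≤ b) :
    ‖y.det‖ ≤ (n.factorial : ℝ) * (Q ^ (n - 2) * b ^ 2) := by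
  have hQ : (0:ℝ) ≤ Q := hb.trans hbQ
  have hent : ∀ l j, ‖y l j‖ ≤ Q := by
    intro l j
    by_cases h : l = j
    · subst h; exact hd l
    · exact (ho l j h).trans hbQ
  rw [Matrix.det_apply]
  refine (norm_sum_le _ _).trans ?_
  have hterm : ∀ σ : Equiv.Perm (Fin n),
      ‖Equiv.Perm.sign σ • ∏ i, y (σ i) i‖ ≤ Q ^ (n - 2) * b ^ 2 := by
    intro σ
    have hsign : ‖Equiv.Perm.sign σ • ∏ i, y (σ i) i‖ = ‖∏ i, y (σ i) i‖ := by
      rcases Int.units_eq_one_or (Equiv.Perm.sign σ) with h | h <;> simp [h]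
    rw [hsign, norm_prod]
    by_cases hσ : σ = 1
    · subst hσ
      have hz : ∏ i : Fin n, ‖y ((1 : Equiv.Perm (Fin n)) i) i‖ = 0 := by
        apply Finset.prod_eq_zero (mem_univ i₀)
        simp [h0]
      rw [hz]
      positivity
    · obtain ⟨l₁, hl₁⟩ : ∃ l, σ l ≠ l := by
        by_contra hc
        push_neg at hc
        exact hσ (Equiv.ext fun i => hc i)
      set l₂ := σ l₁ with hl₂def
      have hne : l₂ ≠ l₁ := hl₁
      have hl₂ : σ l₂ ≠ l₂ := by
        intro h
        exact hl₁ (σ.injective (by rw [h]))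
      have hmem₂ : l₂ ∈ (univ : Finset (Fin n)).erase l₁ := by
        simp [Finset.mem_erase, hne]
      calc ∏ i, ‖y (σ i) i‖
          = ‖y (σ l₁) l₁‖ * ∏ i ∈ univ.erase l₁, ‖y (σ i) i‖ :=
            (Finset.mul_prod_erase _ _ (mem_univ l₁)).symm
        _ = ‖y (σ l₁) l₁‖ * (‖y (σ l₂) l₂‖ * ∏ i ∈ (univ.erase l₁).erase l₂, ‖y (σ i) i‖) := by
            rw [← Finset.mul_prod_erase _ _ hmem₂]
        _ ≤ b * (b * Q ^ (n - 2)) := by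
            apply mul_le_mul (ho _ _ hl₁) ?_
              (mul_nonneg (norm_nonneg _) (Finset.prod_nonneg fun i _ => norm_nonneg _)) hb
            apply mul_le_mul (ho _ _ hl₂) ?_
              (Finset.prod_nonneg fun i _ => norm_nonneg _) hb
            calc ∏ i ∈ (univ.erase l₁).erase l₂, ‖y (σ i) i‖
                ≤ ∏ _i ∈ (univ.erase l₁).erase l₂, Q :=
                  Finset.prod_le_prod (fun i _ => norm_nonneg _) (fun i _ => hent _ _)
              _ = Q ^ (n - 2) := by
                  rw [Finset.prod_const]
                  congr 1
                  rw [Finset.card_erase_of_mem hmem₂, Finset.card_erase_of_mem (mem_univ l₁),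
                    Finset.card_univ, Fintype.card_fin]
                  omega
        _ = Q ^ (n - 2) * b ^ 2 := by ring
  calc ∑ σ : Equiv.Perm (Fin n), ‖Equiv.Perm.sign σ • ∏ i, y (σ i) i‖
      ≤ ∑ _σ : Equiv.Perm (Fin n), Q ^ (n - 2) * b ^ 2 :=
        Finset.sum_le_sum fun σ _ => hterm σ
    _ = (n.factorial : ℝ) * (Q ^ (n - 2) * b ^ 2) := by
        rw [Finset.sum_const, Finset.card_univ, Fintype.card_perm, Fintype.card_fin,
          nsmul_eq_mul]

lemma exists_perm_of_map_eq {α : Type*} :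
    ∀ {k : ℕ} (v w : Fin k → α),
      Multiset.map v Finset.univ.val = Multiset.map w Finset.univ.val →
      ∃ σ : Equiv.Perm (Fin k), ∀ i, v i = w (σ i) := by
  intro k
  induction k with
  | zero => intro v w _; exact ⟨1, fun i => i.elim0⟩
  | succ k ih =>
    intro v w h
    have hmem : v 0 ∈ Multiset.map w Finset.univ.val := by
      rw [← h]
      exact Multiset.mem_map_of_mem _ (Finset.mem_univ_val (0 : Fin (k+1)))
    obtain ⟨j, -, hj⟩ := Multiset.mem_map.mp hmem
    have hv : Multiset.map v Finset.univ.val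
        = v 0 ::ₘ Multiset.map (v ∘ Fin.succ) Finset.univ.val := by
      rw [Fin.univ_succ]
      simp only [Finset.cons_val, Multiset.map_cons, Finset.map_val, Multiset.map_map]
      rfl
    have hw : Multiset.map w Finset.univ.val
        = w j ::ₘ Multiset.map (w ∘ j.succAbove) Finset.univ.val := by
      rw [Fin.univ_succAbove _ j]
      simp only [Finset.cons_val, Multiset.map_cons, Finset.map_val, Multiset.map_map]
      rfl
    rw [hv, hw, ← hj] at h
    have h' := (Multiset.cons_inj_right _).mp h
    obtain ⟨τ, hτ⟩ := ih (v ∘ Fin.succ) (w ∘ j.succAbove) h'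
    refine ⟨(finSuccEquiv' 0).trans ((Equiv.optionCongr τ).trans (finSuccEquiv' j).symm), ?_⟩
    intro i
    refine Fin.cases ?_ (fun i' => ?_) i
    · simp [hj]
    · have h1 : (0 : Fin (k+1)).succAbove i' = i'.succ := by
        simp [Fin.succAbove_zero]
      simp only [Equiv.trans_apply]
      rw [← h1, finSuccEquiv'_succAbove]
      simp only [Equiv.optionCongr_apply, Option.map_some, finSuccEquiv'_symm_some]
      rw [h1]
      exact hτ i'

lemma diag_perm_mem (n : ℕ) (d : Fin n → ℂ) (σ : Equiv.Perm (Fin n)) :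
    Matrix.diagonal (fun i => d (σ i)) ∈ adjointOrbit n d := by
  classical
  have h1 : (σ.toPEquiv.toMatrix : Matrix (Fin n) (Fin n) ℂ) * (σ⁻¹).toPEquiv.toMatrix = 1 := by
    rw [← PEquiv.toMatrix_trans, ← Equiv.toPEquiv_trans]
    rw [show σ.trans σ⁻¹ = 1 from by ext i; simp]
    rw [show (1 : Equiv.Perm (Fin n)) = Equiv.refl (Fin n) from rfl, Equiv.toPEquiv_refl,
      PEquiv.toMatrix_refl]
  have h2 : ((σ⁻¹).toPEquiv.toMatrix : Matrix (Fin n) (Fin n) ℂ) * σ.toPEquiv.toMatrix = 1 := by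
    rw [← PEquiv.toMatrix_trans, ← Equiv.toPEquiv_trans]
    rw [show (σ⁻¹ : Equiv.Perm (Fin n)).trans σ = 1 from by ext i; simp]
    rw [show (1 : Equiv.Perm (Fin n)) = Equiv.refl (Fin n) from rfl, Equiv.toPEquiv_refl,
      PEquiv.toMatrix_refl]
  refine ⟨⟨σ.toPEquiv.toMatrix, (σ⁻¹).toPEquiv.toMatrix, h1, h2⟩, ?_⟩
  show Matrix.diagonal (fun i => d (σ i))
      = σ.toPEquiv.toMatrix * Matrix.diagonal d * (σ⁻¹).toPEquiv.toMatrix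
  rw [PEquiv.toMatrix_toPEquiv_mul, PEquiv.mul_toMatrix_toPEquiv]
  rw [Matrix.submatrix_submatrix]
  rw [show ((σ⁻¹ : Equiv.Perm (Fin n)).symm : Fin n → Fin n) = σ from rfl]
  have hc1 : ((σ : Fin n → Fin n) ∘ id) = σ := rfl
  have hc2 : (id ∘ (σ : Fin n → Fin n)) = σ := rfl
  rw [hc1, hc2, Matrix.submatrix_diagonal _ _ σ.injective]
  rfl

set_option maxHeartbeats 4000000 in
lemma stepA (n : ℕ) (d : Fin n → ℂ) :
    ∃ C₁ C₂ : ℝ, 0 ≤ C₁ ∧ 0 ≤ C₂ ∧ ∀ x ∈ adjointOrbit n d,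
      ‖diagPart x‖ ≤ C₁ + C₂ * ‖x - diagPart x‖ := by
  classical
  set m : ℝ := ∑ j, ‖d j‖ with hm_def
  have hm0 : 0 ≤ m := Finset.sum_nonneg fun _ _ => norm_nonneg _
  have hm : ∀ j, ‖d j‖ ≤ m := fun j =>
    Finset.single_le_sum (fun _ _ => norm_nonneg _) (mem_univ j)
  set K : ℝ := Real.sqrt ((n.factorial : ℝ) * 2 ^ n * (m + 1) ^ n) with hK_def
  have hK0 : 0 ≤ K := Real.sqrt_nonneg _
  refine ⟨Real.sqrt n * (m + 1), Real.sqrt n * (1 + K), by positivity, by positivity, ?_⟩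
  intro x hx
  set b := ‖x - diagPart x‖ with hb_def
  have hb0 : 0 ≤ b := norm_nonneg _
  have hsqn : (0:ℝ) ≤ Real.sqrt n := Real.sqrt_nonneg _
  have hoff : ∀ i j : Fin n, i ≠ j → ‖x i j‖ ≤ b := by
    intro i j hij
    have he : (x - diagPart x) i j = x i j := by
      simp [diagPart, Matrix.sub_apply, Matrix.diagonal_apply_ne _ hij]
    calc ‖x i j‖ = ‖(x - diagPart x) i j‖ := by rw [he]
      _ ≤ b := entry_le _ i j
  rcases Nat.eq_zero_or_pos n with hn | hn
  · subst hn
    have h0 : diagPart x = 0 := Subsingleton.elim _ _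
    rw [h0, norm_zero]
    positivity
  obtain ⟨i₀, -, hmax⟩ := Finset.exists_max_image (univ : Finset (Fin n)) (fun i => ‖x i i‖)
      ⟨⟨0, hn⟩, Finset.mem_univ _⟩
  set M := ‖x i₀ i₀‖ with hM_def
  have hM0 : 0 ≤ M := norm_nonneg _
  have hdiagle : ‖diagPart x‖ ≤ Real.sqrt n * M :=
    norm_diagonal_le _ M hM0 (fun i => hmax i (mem_univ i))
  rcases le_or_gt M (m + 1 + b) with hcase | hcase
  · calc ‖diagPart x‖ ≤ Real.sqrt n * M := hdiagle
      _ ≤ Real.sqrt n * (m + 1 + b) := mul_le_mul_of_nonneg_left hcase hsqn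
      _ ≤ Real.sqrt n * (m + 1) + Real.sqrt n * (1 + K) * b := by
          nlinarith [mul_nonneg (mul_nonneg hsqn hK0) hb0]
  · set y := x i₀ i₀ • (1 : Matrix (Fin n) (Fin n) ℂ) - x with hy_def
    have hy0 : y i₀ i₀ = 0 := by
      simp [hy_def, Matrix.sub_apply, Matrix.smul_apply, Matrix.one_apply_eq]
    have hyd : ∀ l, ‖y l l‖ ≤ 2 * M := by
      intro l
      have he : y l l = x i₀ i₀ - x l l := by
        simp [hy_def, Matrix.sub_apply, Matrix.smul_apply, Matrix.one_apply_eq]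
      rw [he]
      have h1 := hmax l (mem_univ l)
      calc ‖x i₀ i₀ - x l l‖ ≤ ‖x i₀ i₀‖ + ‖x l l‖ := norm_sub_le _ _
        _ ≤ 2 * M := by rw [← hM_def] at *; linarith
    have hyo : ∀ l j, l ≠ j → ‖y l j‖ ≤ b := by
      intro l j hlj
      have he : y l j = -(x l j) := by
        simp [hy_def, Matrix.sub_apply, Matrix.smul_apply, Matrix.one_apply_ne hlj]
      rw [he, norm_neg]
      exact hoff l j hlj
    have hb2M : b ≤ 2 * M := by linarith
    have hupper := det_bound y i₀ hy0 (2 * M) b hb0 hb2M hyd hyo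
    have hdet : y.det = ∏ j, (x i₀ i₀ - d j) := by
      rw [hy_def]
      exact orbit_det d hx _
    have hlow : (M - m) ^ n ≤ ‖y.det‖ := by
      rw [hdet, norm_prod]
      calc (M - m) ^ n = ∏ _j : Fin n, (M - m) := by
            rw [Finset.prod_const, Finset.card_univ, Fintype.card_fin]
        _ ≤ ∏ j, ‖x i₀ i₀ - d j‖ := by
            apply Finset.prod_le_prod (fun _ _ => by linarith)
            intro j _
            have h1 : ‖x i₀ i₀‖ - ‖d j‖ ≤ ‖x i₀ i₀ - d j‖ := norm_sub_norm_le _ _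
            have h2 := hm j
            rw [← hM_def] at h1
            linarith
    have hn2 : 2 ≤ n := by
      by_contra h2
      have hn1 : n = 1 := by omega
      subst hn1
      have hij : ∀ i j : Fin 1, i = j := fun i j => Subsingleton.elim i j
      have hbz : b = 0 := by
        have : x - diagPart x = 0 := by
          ext i j
          rw [hij i j]
          simp [diagPart, Matrix.sub_apply]
        rw [hb_def, this, norm_zero]
      rw [hbz] at hupper
      have hlp : 0 < (M - m) ^ 1 := by
        have : 0 < M - m := by linarith
        simpa using this
      have := le_trans hlow hupper
      norm_num at this
      linarith
    have hM1 : 1 ≤ M := by linarith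
    have hMpos : 0 < M := by linarith
    have hMn : M / (m + 1) ≤ M - m := by
      rw [div_le_iff₀ (by linarith : (0:ℝ) < m + 1)]
      nlinarith
    have h6 : (M / (m + 1)) ^ n ≤ (M - m) ^ n :=
      pow_le_pow_left₀ (div_nonneg hM0 (by linarith)) hMn n
    have h7 : (M / (m + 1)) ^ n ≤ (n.factorial : ℝ) * ((2 * M) ^ (n - 2) * b ^ 2) :=
      le_trans h6 (le_trans hlow hupper)
    rw [div_pow] at h7
    have hmp : (0:ℝ) < (m + 1) ^ n := pow_pos (by linarith) n
    have h8 : M ^ n ≤ (n.factorial : ℝ) * ((2 * M) ^ (n - 2) * b ^ 2) * (m + 1) ^ n := by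
      rw [div_le_iff₀ hmp] at h7
      exact h7
    have h9 : M ^ n = M ^ (n - 2) * M ^ 2 := by
      rw [← pow_add]
      congr 1
      omega
    have h10 : (2 * M) ^ (n - 2) = 2 ^ (n - 2) * M ^ (n - 2) := mul_pow _ _ _
    have h11 : M ^ 2 ≤ ((n.factorial : ℝ) * 2 ^ (n - 2) * (m + 1) ^ n) * b ^ 2 := by
      have hMn2 : (0:ℝ) < M ^ (n - 2) := pow_pos hMpos _
      have h8' : M ^ 2 * M ^ (n - 2)
          ≤ (((n.factorial : ℝ) * 2 ^ (n - 2) * (m + 1) ^ n) * b ^ 2) * M ^ (n - 2) := by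
        calc M ^ 2 * M ^ (n - 2) = M ^ (n - 2) * M ^ 2 := by ring
          _ = M ^ n := h9.symm
          _ ≤ (n.factorial : ℝ) * ((2 * M) ^ (n - 2) * b ^ 2) * (m + 1) ^ n := h8
          _ = (((n.factorial : ℝ) * 2 ^ (n - 2) * (m + 1) ^ n) * b ^ 2) * M ^ (n - 2) := by
              rw [h10]; ring
      exact le_of_mul_le_mul_right h8' hMn2
    have h12 : M ^ 2 ≤ (K * b) ^ 2 := by
      have hKsq : K ^ 2 = (n.factorial : ℝ) * 2 ^ n * (m + 1) ^ n := Real.sq_sqrt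
        (mul_nonneg (mul_nonneg (Nat.cast_nonneg _) (pow_nonneg (by norm_num) n))
          (pow_nonneg (by linarith) n))
      have h2le : (2:ℝ) ^ (n - 2) ≤ 2 ^ n := pow_le_pow_right₀ (by norm_num) (by omega)
      have hf0 : (0:ℝ) ≤ (n.factorial : ℝ) := Nat.cast_nonneg _
      have hb2 : (0:ℝ) ≤ b ^ 2 := sq_nonneg b
      have hmp' : (0:ℝ) ≤ (m + 1) ^ n := le_of_lt hmp
      calc M ^ 2 ≤ ((n.factorial : ℝ) * 2 ^ (n - 2) * (m + 1) ^ n) * b ^ 2 := h11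
        _ ≤ ((n.factorial : ℝ) * 2 ^ n * (m + 1) ^ n) * b ^ 2 := by
            apply mul_le_mul_of_nonneg_right ?_ hb2
            apply mul_le_mul_of_nonneg_right ?_ hmp'
            exact mul_le_mul_of_nonneg_left h2le hf0
        _ = (K * b) ^ 2 := by rw [mul_pow, hKsq]
    have h13 : M ≤ K * b := by
      calc M = Real.sqrt (M ^ 2) := (Real.sqrt_sq hM0).symm
        _ ≤ Real.sqrt ((K * b) ^ 2) := Real.sqrt_le_sqrt h12
        _ = K * b := Real.sqrt_sq (mul_nonneg hK0 hb0)
    calc ‖diagPart x‖ ≤ Real.sqrt n * M := hdiagle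
      _ ≤ Real.sqrt n * (K * b) := mul_le_mul_of_nonneg_left h13 hsqn
      _ ≤ Real.sqrt n * (m + 1) + Real.sqrt n * (1 + K) * b := by
          nlinarith [mul_nonneg hsqn hb0, mul_nonneg hsqn (mul_nonneg hK0 hb0)]

set_option maxHeartbeats 1000000 in
lemma stepB (n : ℕ) (d : Fin n → ℂ) (ε : ℝ) (hε : 0 < ε) (C₁ C₂ : ℝ) (hC₁ : 0 ≤ C₁)
    (hC₂ : 0 ≤ C₂)
    (hbound : ∀ x ∈ adjointOrbit n d, ‖diagPart x‖ ≤ C₁ + C₂ * ‖x - diagPart x‖) :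
    ∃ δ : ℝ, 0 < δ ∧ ∀ x ∈ adjointOrbit n d,
      (∀ y ∈ adjointOrbit n d, y.IsDiag → ε < ‖x - y‖) → δ ≤ ‖x - diagPart x‖ := by
  classical
  by_contra hcon
  push_neg at hcon
  have hex : ∀ k : ℕ, ∃ x, x ∈ adjointOrbit n d ∧
      (∀ y ∈ adjointOrbit n d, y.IsDiag → ε < ‖x - y‖) ∧
      ‖x - diagPart x‖ < 1 / ((k : ℝ) + 1) := by
    intro k
    obtain ⟨x, hx1, hx2, hx3⟩ := hcon (1 / ((k : ℝ) + 1)) (by positivity)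
    exact ⟨x, hx1, hx2, hx3⟩
  choose u hu1 hu2 hu3 using hex
  have hble : ∀ k : ℕ, ‖u k - diagPart (u k)‖ ≤ 1 := by
    intro k
    refine (hu3 k).le.trans ?_
    rw [div_le_one (by positivity)]
    have : (0:ℝ) ≤ (k : ℝ) := Nat.cast_nonneg k
    linarith
  set R : ℝ := C₁ + C₂ + 1 with hR_def
  have hR : ∀ k, u k ∈ Metric.closedBall (0 : Matrix (Fin n) (Fin n) ℂ) R := by
    intro k
    rw [Metric.mem_closedBall, dist_zero_right]
    have h1 := hbound (u k) (hu1 k)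
    have h2 := hble k
    have h3 : ‖u k‖ ≤ ‖diagPart (u k)‖ + ‖u k - diagPart (u k)‖ := by
      calc ‖u k‖ = ‖diagPart (u k) + (u k - diagPart (u k))‖ := by
            congr 1
            abel
        _ ≤ ‖diagPart (u k)‖ + ‖u k - diagPart (u k)‖ := norm_add_le _ _
    have h4 : (0:ℝ) ≤ ‖u k - diagPart (u k)‖ := norm_nonneg _
    nlinarith
  obtain ⟨a, -, φ, hφmono, hφtend⟩ :=
    (isCompact_closedBall (0 : Matrix (Fin n) (Fin n) ℂ) R).tendsto_subseq hR
  have hφk : ∀ k : ℕ, k ≤ φ k := fun k => hφmono.le_apply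
  have hbume : ∀ k : ℕ, ‖u (φ k) - diagPart (u (φ k))‖ ≤ 1 / ((k : ℝ) + 1) := by
    intro k
    refine (hu3 (φ k)).le.trans ?_
    apply one_div_le_one_div_of_le (by positivity)
    have := (Nat.cast_le (α := ℝ)).mpr (hφk k)
    linarith
  have htend0 : Filter.Tendsto (fun k : ℕ => ‖u (φ k) - diagPart (u (φ k))‖)
      Filter.atTop (nhds 0) :=
    squeeze_zero (fun k => norm_nonneg _) hbume tendsto_one_div_add_atTop_nhds_zero_nat
  have hoffa : ∀ i j : Fin n, i ≠ j → a i j = 0 := by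
    intro i j hij
    have h1 : Filter.Tendsto (fun k : ℕ => (u (φ k)) i j) Filter.atTop (nhds (a i j)) :=
      ((continuous_entry i j).tendsto a).comp hφtend
    have h2 : Filter.Tendsto (fun k : ℕ => (u (φ k)) i j) Filter.atTop (nhds 0) := by
      apply squeeze_zero_norm (fun k => ?_) htend0
      have he : (u (φ k) - diagPart (u (φ k))) i j = (u (φ k)) i j := by
        simp [diagPart, Matrix.sub_apply, Matrix.diagonal_apply_ne _ hij]
      calc ‖(u (φ k)) i j‖ = ‖(u (φ k) - diagPart (u (φ k))) i j‖ := by rw [he]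
        _ ≤ ‖u (φ k) - diagPart (u (φ k))‖ := entry_le _ i j
    exact tendsto_nhds_unique h1 h2
  have hdeta : ∀ t : ℂ, (t • (1 : Matrix (Fin n) (Fin n) ℂ) - a).det = ∏ j, (t - d j) := by
    intro t
    have h1 : Filter.Tendsto (fun k : ℕ => (t • (1 : Matrix (Fin n) (Fin n) ℂ) - u (φ k)).det)
        Filter.atTop (nhds ((t • (1 : Matrix (Fin n) (Fin n) ℂ) - a).det)) :=
      ((continuous_det_shift t).tendsto a).comp hφtend
    have h2 : (fun k : ℕ => (t • (1 : Matrix (Fin n) (Fin n) ℂ) - u (φ k)).det)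
        = fun _ => ∏ j, (t - d j) :=
      funext fun k => orbit_det d (hu1 (φ k)) t
    rw [h2] at h1
    exact (tendsto_nhds_unique tendsto_const_nhds h1).symm
  have ha_diag : a = Matrix.diagonal (fun i => a i i) := by
    ext i j
    by_cases h : i = j
    · subst h; simp
    · rw [Matrix.diagonal_apply_ne _ h]
      exact hoffa i j h
  have hprod : ∀ t : ℂ, ∏ j, (t - a j j) = ∏ j, (t - d j) := by
    intro t
    have := hdeta t
    rw [ha_diag, smul_one_sub_diag, Matrix.det_diagonal] at this
    convert this using 2
  have hpoly : (∏ j, (Polynomial.X - Polynomial.C (a j j)))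
      = ∏ j, (Polynomial.X - Polynomial.C (d j)) := by
    apply Polynomial.funext
    intro t
    simpa [Polynomial.eval_prod] using hprod t
  have hroots : Multiset.map (fun j => a j j) Finset.univ.val
      = Multiset.map d Finset.univ.val := by
    have h1 := congrArg Polynomial.roots hpoly
    have e1 : (∏ j, (Polynomial.X - Polynomial.C (a j j)))
        = (Multiset.map (fun r => Polynomial.X - Polynomial.C r)
            (Multiset.map (fun j => a j j) Finset.univ.val)).prod := by
      rw [Multiset.map_map]
      rfl
    have e2 : (∏ j, (Polynomial.X - Polynomial.C (d j)))
        = (Multiset.map (fun r => Polynomial.X - Polynomial.C r)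
            (Multiset.map d Finset.univ.val)).prod := by
      rw [Multiset.map_map]
      rfl
    rwa [e1, e2, Polynomial.roots_multiset_prod_X_sub_C,
      Polynomial.roots_multiset_prod_X_sub_C] at h1
  obtain ⟨σ, hσ⟩ := exists_perm_of_map_eq (fun j => a j j) d hroots
  have hmem : a ∈ adjointOrbit n d := by
    rw [ha_diag, show (fun i => a i i) = fun i => d (σ i) from funext hσ]
    exact diag_perm_mem n d σ
  have hIsDiag : a.IsDiag := fun {i j} hij => hoffa i j hij
  have hfar : ∀ k : ℕ, ε ≤ ‖u (φ k) - a‖ := fun k => (hu2 (φ k) a hmem hIsDiag).le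
  have hnorm0 : Filter.Tendsto (fun k : ℕ => ‖u (φ k) - a‖) Filter.atTop (nhds 0) := by
    have := tendsto_iff_norm_sub_tendsto_zero.mp hφtend
    exact this
  have : ε ≤ 0 := ge_of_tendsto hnorm0 (Filter.Eventually.of_forall hfar)
  linarith

end

end AwayFromSing

/-- Let `H₀ = diagonal d` be a traceless complex diagonal matrix, `O(H₀)` its adjoint
orbit and `S(H₀)` the set of diagonal matrices lying in `O(H₀)`.  For every `ε > 0`
there is a constant `Γ_ε > 0` such that every `x ∈ O(H₀)` at distance greater than `ε`
from all points of `S(H₀)` satisfies `‖diag(x)‖ < Γ_ε * ‖x - diag(x)‖`: the orbit is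
not asymptotic to the Cartan subalgebra of diagonal matrices. -/
theorem diagPart_lt_const_mul_offDiagonal_away_from_singularities
    (n : ℕ) (d : Fin n → ℂ) (htr : Matrix.trace (Matrix.diagonal d) = 0) :
    ∀ ε > (0 : ℝ), ∃ Γ > (0 : ℝ), ∀ x ∈ adjointOrbit n d,
      (∀ y ∈ adjointOrbit n d, y.IsDiag → ε < ‖x - y‖) →
      ‖diagPart x‖ < Γ * ‖x - diagPart x‖ := by
  intro ε hε
  obtain ⟨C₁, C₂, hC₁, hC₂, hbound⟩ := AwayFromSing.stepA n d
  obtain ⟨δ, hδ, hstep⟩ := AwayFromSing.stepB n d ε hε C₁ C₂ hC₁ hC₂ hbound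
  refine ⟨(C₁ + 1) / δ + C₂ + 1, by positivity, ?_⟩
  intro x hx hfar
  have h1 := hbound x hx
  have h2 := hstep x hx hfar
  have hb0 : 0 ≤ ‖x - diagPart x‖ := norm_nonneg _
  have hq : ((C₁ + 1) / δ + C₂ + 1) * ‖x - diagPart x‖
      = ((C₁ + 1) / δ) * ‖x - diagPart x‖ + C₂ * ‖x - diagPart x‖ + ‖x - diagPart x‖ := by
    ring
  have h3 : C₁ + 1 ≤ ((C₁ + 1) / δ) * ‖x - diagPart x‖ := by
    rw [div_mul_eq_mul_div, le_div_iff₀ hδ]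
    nlinarith
  linarith
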